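/- Let q be a prime power, let n, m be positive integers with n | m, and let σ : x ↦ x^{q^s} with gcd(s,m)=1. Let 𝒞 be a set of σ-linearized polynomials over F_{q^m}, let β ∈ F_{q^m}^*, let α_1,…,α_n be an F_q-basis of βF_{q^n}, let C = {(g(α_1),…,g(α_n)) : g ∈ 𝒞} ⊆ F_{q^m}^n, and let d be its minimum rank distance. Let l and h be positive integers with n−d+1 ≤ l ≤ n−⌊(d−1)/2⌋−1 and h ≤ l. Suppose: (i) (𝒢_{n,h,σ})^{σ^j} = { Σ_{i=j}^{j+h−1} a_i x^{σ^i} : a_i ∈ F_{q^m} } ⊆ 𝒞 for some integer j with 0 ≤ j ≤ n−l; and (ii) there exists a set Sub of g distinct σ-linearized polynomials, each of the form x^{σ^l} + a_{h−1}x^{σ^{h−1}} + ⋯ + a_0 x with a_0,…,a_{h−1} ∈ F_{q^n}, each having exactly q^l roots in F_{q^n}. Fix an F_q-basis of F_{q^m} and identify each v ∈ F_{q^m}^n with the matrix in F_q^{m×n} whose columns are the coordinate vectors of its entries. Then there exists a word w ∈ F_{q^m}^n ∖ C such that |{ V ∈ I(C^T) : d_s(I(w^T), V) ≤ 2(n−l)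 }| ≥ g, where I(C^T) = { I(c^T) : c ∈ C }. -/

import Mathlib

/-- Rank weight of a vector `v ∈ K^n` over `F_q`. -/
noncomputable def rkw (Fq : Type) [Field Fq] {K : Type} [Field K] [Algebra Fq K] {n : ℕ}
    (v : Fin n → K) : ℕ :=
  Module.finrank Fq ↥(Submodule.span Fq (Set.range v))

/-- Ball of radius `t` around `w` in the rank metric. -/
def ball (Fq : Type) [Field Fq] {K : Type} [Field K] [Algebra Fq K] {n : ℕ}
    (w : Fin n → K) (t : ℕ) : Set (Fin n → K) :=
  {c : Fin n → K | rkw Fq (w - c) ≤ t}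

/-- Minimum rank distance of a code `C ⊆ K^n`. -/
noncomputable def minDist (Fq : Type) [Field Fq] {K : Type} [Field K] [Algebra Fq K] {n : ℕ}
    (C : Set (Fin n → K)) : ℕ :=
  sInf {r : ℕ | ∃ u ∈ C, ∃ v ∈ C, u ≠ v ∧ rkw Fq (u - v) = r}

/-- The lifting `I(v^T)`: given an `F_q`-basis `b` of `K` and `v ∈ K^n`, identify `v`
with the `n×m` matrix over `F_q` whose `i`-th row is the coordinate vector of `v i`,
and take the row space of `[I_n | v^T]` inside `F_q^{n+m}`. -/
noncomputable def liftv (Fq : Type) [Field Fq] {K : Type} [Field K] [Algebra Fq K]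
    {n m : ℕ} (b : Module.Basis (Fin m) Fq K) (v : Fin n → K) :
    Submodule Fq (Fin (n + m) → Fq) :=
  Submodule.span Fq (Set.range fun i : Fin n =>
    Fin.append (fun i' : Fin n => if i = i' then (1 : Fq) else 0)
      (fun j' : Fin m => b.repr (v i) j'))

/-- Subspace distance `d_s(U,V) = dim U + dim V − 2 dim (U ⊓ V)`. -/
noncomputable def sdist (Fq : Type) [Field Fq] {N : ℕ}
    (U V : Submodule Fq (Fin N → Fq)) : ℕ :=
  Module.finrank Fq ↥U + Module.finrank Fq ↥V - 2 * Module.finrank Fq ↥(U ⊓ V)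



lemma pow_card_isLinearMap (Fq : Type) [Field Fq] [Fintype Fq] (K : Type) [Field K]
    [Algebra Fq K] (t : ℕ) :
    IsLinearMap Fq (fun x : K => x ^ (Fintype.card Fq) ^ t) := by
  haveI : CharP Fq (ringChar Fq) := ringChar.charP Fq
  have hp : (ringChar Fq).Prime := CharP.char_is_prime Fq (ringChar Fq)
  haveI := Fact.mk hp
  haveI : CharP K (ringChar Fq) :=
    charP_of_injective_algebraMap (algebraMap Fq K).injective (ringChar Fq)
  obtain ⟨e, -, hcard⟩ := FiniteField.card Fq (ringChar Fq)
  constructor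
  · intro x y
    have h : ∀ z : K, z ^ (Fintype.card Fq) ^ t = z ^ (ringChar Fq) ^ ((e : ℕ) * t) :=
      fun z => by rw [hcard, ← pow_mul]
    rw [h, h, h, add_pow_char_pow]
  · intro c x
    rw [Algebra.smul_def, Algebra.smul_def, mul_pow, ← map_pow,
      FiniteField.pow_card_pow]

noncomputable def monLin (Fq : Type) [Field Fq] [Fintype Fq] {K : Type} [Field K]
    [Algebra Fq K] (cf : K) (t : ℕ) : K →ₗ[Fq] K :=
  cf • IsLinearMap.mk' _ (pow_card_isLinearMap Fq K t)

lemma monLin_apply (Fq : Type) [Field Fq] [Fintype Fq] {K : Type} [Field K]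
    [Algebra Fq K] (cf : K) (t : ℕ) (x : K) :
    monLin Fq cf t x = cf * x ^ (Fintype.card Fq) ^ t := rfl

lemma pow_pow_mod {K : Type} [Monoid K] (q n : ℕ) (t : K)
    (ht : t ^ q ^ n = t) (a : ℕ) : t ^ q ^ a = t ^ q ^ (a % n) := by
  conv_lhs => rw [← Nat.div_add_mod a n]
  generalize a / n = c
  induction c with
  | zero => simp
  | succ c ih =>
      have h1 : n * (c + 1) + a % n = n + (n * c + a % n) := by ring
      rw [h1, pow_add, pow_mul, ht]
      exact ih

lemma nat_card_submodule {Fq : Type} [Field Fq] [Fintype Fq] {M : Type} [AddCommGroup M]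
    [Module Fq M] [Finite M] (W : Submodule Fq M) :
    Nat.card ↥W = Fintype.card Fq ^ Module.finrank Fq ↥W := by
  haveI : Fintype ↥W := Fintype.ofFinite _
  rw [Nat.card_eq_fintype_card]
  exact Module.card_eq_pow_finrank

lemma qpoly_vanish {K : Type} [Field K] (q n h : ℕ) (hq : 2 ≤ q) (hn : 0 < n)
    (S : Set K) (hcardS : Nat.card ↥S = q ^ n)
    (e : Fin h → ℕ) (he : Function.Injective e) (helt : ∀ k, e k < n)
    (bb : Fin h → K) (hvan : ∀ t ∈ S, ∑ k, bb k * t ^ q ^ (e k) = 0) :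
    ∀ k, bb k = 0 := by
  classical
  by_contra hcon
  push_neg at hcon
  obtain ⟨k₀, hk₀⟩ := hcon
  set P : Polynomial K := ∑ k : Fin h, Polynomial.C (bb k) * Polynomial.X ^ (q ^ e k) with hP
  have hcond : ∀ k : Fin h, (q ^ e k₀ = q ^ e k) = (k₀ = k) := fun k =>
    propext ⟨fun hh => he (Nat.pow_right_injective hq hh), fun hh => by rw [hh]⟩
  have hcoeff : P.coeff (q ^ e k₀) = bb k₀ := by
    rw [hP, Polynomial.finset_sum_coeff]
    rw [Finset.sum_congr rfl
      (fun k _ => by rw [Polynomial.coeff_C_mul, Polynomial.coeff_X_pow])]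
    simp only [hcond, mul_ite, mul_one, mul_zero]
    rw [Finset.sum_ite_eq Finset.univ k₀ bb]
    simp
  have hP0 : P ≠ 0 := fun hz => hk₀ (by rw [← hcoeff, hz, Polynomial.coeff_zero])
  have hdeg : P.natDegree ≤ q ^ (n - 1) := by
    apply Polynomial.natDegree_sum_le_of_forall_le
    intro k _
    refine le_trans (Polynomial.natDegree_C_mul_le _ _) ?_
    rw [Polynomial.natDegree_X_pow]
    exact Nat.pow_le_pow_right (by omega) (by have := helt k; omega)
  have hsub : S ⊆ ↑P.roots.toFinset := by
    intro t ht
    rw [Finset.mem_coe, Multiset.mem_toFinset, Polynomial.mem_roots']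
    refine ⟨hP0, ?_⟩
    rw [Polynomial.IsRoot.def, hP, Polynomial.eval_finset_sum]
    simpa using hvan t ht
  have hle : q ^ n ≤ q ^ (n - 1) :=
    calc q ^ n = Nat.card ↥S := hcardS.symm
      _ = S.ncard := Nat.card_coe_set_eq S
      _ ≤ (↑P.roots.toFinset : Set K).ncard :=
          Set.ncard_le_ncard hsub (P.roots.toFinset.finite_toSet)
      _ = P.roots.toFinset.card := Set.ncard_coe_finset _
      _ ≤ Multiset.card P.roots := Multiset.toFinset_card_le _
      _ ≤ P.natDegree := Polynomial.card_roots' P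
      _ ≤ q ^ (n - 1) := hdeg
  have hlt : n ≤ n - 1 := (Nat.pow_le_pow_iff_right (by omega)).mp hle
  omega
section Lift
variable (Fq : Type) [Field Fq] [Fintype Fq] {K : Type} [Field K] [Algebra Fq K]
  {n m : ℕ} (b : Module.Basis (Fin m) Fq K)

noncomputable def rows (v : Fin n → K) : Fin n → (Fin (n + m) → Fq) := fun i =>
  Fin.append (fun i' : Fin n => if i = i' then (1 : Fq) else 0)
    (fun j' : Fin m => b.repr (v i) j')

lemma liftv_eq_span (v : Fin n → K) :
    liftv Fq b v = Submodule.span Fq (Set.range (rows Fq b v)) := rfl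

lemma rows_li (v : Fin n → K) : LinearIndependent Fq (rows Fq b v) := by
  rw [Fintype.linearIndependent_iff]
  intro c hc i
  have h := congrFun hc (Fin.castAdd m i)
  simpa [rows, Fin.append_left, Finset.sum_apply, mul_ite] using h

lemma finrank_liftv (v : Fin n → K) : Module.finrank Fq ↥(liftv Fq b v) = n := by
  rw [liftv_eq_span, finrank_span_eq_card (rows_li Fq b v), Fintype.card_fin]

lemma liftv_injective : Function.Injective (liftv Fq b : (Fin n → K) → _) := by
  intro v v' hv
  funext i
  have hmem : rows Fq b v i ∈ Submodule.span Fq (Set.range (rows Fq b v')) := by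
    rw [← liftv_eq_span, ← hv, liftv_eq_span]
    exact Submodule.subset_span (Set.mem_range_self i)
  rw [Submodule.mem_span_range_iff_exists_fun] at hmem
  obtain ⟨c, hcc⟩ := hmem
  have hcd : ∀ i', c i' = if i = i' then 1 else 0 := by
    intro i'
    have h := congrFun hcc (Fin.castAdd m i')
    simpa [rows, Fin.append_left, Finset.sum_apply, mul_ite] using h
  have hj : ∀ j', b.repr (v' i) j' = b.repr (v i) j' := by
    intro j'
    have h := congrFun hcc (Fin.natAdd n j')
    simp only [rows, Finset.sum_apply, Pi.smul_apply, Fin.append_right, smul_eq_mul] at h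
    rw [Finset.sum_congr rfl (fun k _ => by rw [hcd k])] at h
    simpa [ite_mul] using h
  have : b.repr (v' i) = b.repr (v i) := Finsupp.ext hj
  exact (b.repr.injective this).symm

lemma sdist_liftv_le (w c : Fin n → K) :
    sdist Fq (liftv Fq b w) (liftv Fq b c) ≤ 2 * rkw Fq (w - c) := by
  classical
  set Lw := Fintype.linearCombination Fq (rows Fq b w)
  set Lc := Fintype.linearCombination Fq (rows Fq b c)
  set E := Fintype.linearCombination Fq (w - c)
  have hrW : LinearMap.range Lw = liftv Fq b w := by
    rw [liftv_eq_span]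
    exact Fintype.range_linearCombination (R := Fq) (v := rows Fq b w)
  have hrC : LinearMap.range Lc = liftv Fq b c := by
    rw [liftv_eq_span]
    exact Fintype.range_linearCombination (R := Fq) (v := rows Fq b c)
  have hinj : Function.Injective Lw := by
    rw [← LinearMap.ker_eq_bot, LinearMap.ker_eq_bot']
    intro u hu
    have hu' : ∑ i, u i • rows Fq b w i = 0 := by
      rwa [Fintype.linearCombination_apply] at hu
    have := (Fintype.linearIndependent_iff.mp (rows_li Fq b w)) u hu'
    funext i; exact this i
  have key : ∀ u ∈ LinearMap.ker E, Lw u = Lc u := by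
    intro u hu
    have hE : ∑ i, u i • (w i - c i) = 0 := by
      have := hu
      rwa [LinearMap.mem_ker, Fintype.linearCombination_apply] at this
    have hwc : ∑ i, u i • w i = ∑ i, u i • c i := by
      rw [← sub_eq_zero, ← Finset.sum_sub_distrib]
      simpa [smul_sub] using hE
    funext x
    refine Fin.addCases (fun i' => ?_) (fun j' => ?_) x
    · simp [Lw, Lc, Fintype.linearCombination_apply, Finset.sum_apply, rows, Fin.append_left]
    · have hrepr := congrArg (fun z => b.repr z j') hwc
      simp only [map_sum, map_smul, Finsupp.coe_finset_sum, Finset.sum_apply,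
        Finsupp.coe_smul, Pi.smul_apply, smul_eq_mul] at hrepr
      simpa [Lw, Lc, Fintype.linearCombination_apply, Finset.sum_apply, rows,
        Fin.append_right] using hrepr
  have hle : (LinearMap.ker E).map Lw ≤ liftv Fq b w ⊓ liftv Fq b c := by
    rintro y ⟨u, hu, rfl⟩
    constructor
    · rw [← hrW]; exact ⟨u, rfl⟩
    · rw [← hrC]; rw [key u hu]; exact ⟨u, rfl⟩
  have h1 : Module.finrank Fq ↥(LinearMap.range E) + Module.finrank Fq ↥(LinearMap.ker E)
      = n := by
    rw [LinearMap.finrank_range_add_finrank_ker]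
    simp [Module.finrank_fin_fun]
  have h2 : Module.finrank Fq ↥(LinearMap.range E) = rkw Fq (w - c) := by
    rw [rkw, Fintype.range_linearCombination]

  have h3 : Module.finrank Fq ↥(LinearMap.ker E)
      ≤ Module.finrank Fq ↥(liftv Fq b w ⊓ liftv Fq b c) := by
    calc Module.finrank Fq ↥(LinearMap.ker E)
        = Module.finrank Fq ↥((LinearMap.ker E).map Lw) :=
          (Submodule.equivMapOfInjective Lw hinj (LinearMap.ker E)).finrank_eq
      _ ≤ _ := Submodule.finrank_mono hle
  have h4 := finrank_liftv Fq b w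
  have h5 := finrank_liftv Fq b c
  simp only [sdist, h4, h5]
  omega
end Lift


set_option maxHeartbeats 1000000 in
/-- under the hypotheses of Statement 10 (with `j ≤ n−l`), the lifted
subspace code `I(C^T)` contains at least `g` subspaces within subspace distance
`2(n−l)` of the lifted word `I(w^T)`, for some `w ∉ C`. -/
theorem stmt_19 (q s n m l h g j : ℕ) (Fq K : Type) [Field Fq] [Fintype Fq] [Field K]
    [Fintype K] [Algebra Fq K]
    (hcard : Fintype.card Fq = q) (hfin : Module.finrank Fq K = m)
    (hn : 0 < n) (hnm : n ∣ m) (hs : Nat.gcd s m = 1)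
    (𝒞 : Set (K → K))
    (hlin : ∀ f ∈ 𝒞, ∃ N : ℕ, ∃ a : Fin N → K, ∀ x : K,
      f x = ∑ i : Fin N, a i * x ^ ((q ^ s) ^ (i : ℕ)))
    (β : K) (hβ : β ≠ 0)
    (α : Fin n → K) (hα : LinearIndependent Fq α)
    (hspan : (Submodule.span Fq (Set.range α) : Set K)
      = (fun y : K => β * y) '' {x : K | x ^ q ^ n = x})
    (C : Set (Fin n → K)) (hC : C = (fun g : K → K => fun i : Fin n => g (α i)) '' 𝒞)
    (d : ℕ) (hd : d = minDist Fq C)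
    (hl0 : 0 < l) (hh0 : 0 < h)
    (hl1 : (n : ℤ) - d + 1 ≤ (l : ℤ))
    (hl2 : (l : ℤ) ≤ (n : ℤ) - (((d - 1) / 2 : ℕ) : ℤ) - 1)
    (hhl : h ≤ l)
    (hj : (j : ℤ) ≤ (n : ℤ) - (l : ℤ))
    (hGab : {f : K → K | ∃ a : Fin h → K, ∀ x : K,
        f x = ∑ i : Fin h, a i * x ^ ((q ^ s) ^ (j + (i : ℕ)))} ⊆ 𝒞)
    (Sub : Set (Fin h → K)) (hSubcard : Nat.card ↥Sub = g)
    (hSub : ∀ a ∈ Sub, (∀ i : Fin h, a i ^ q ^ n = a i) ∧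
      Nat.card ↥{x : K | x ^ q ^ n = x ∧
        x ^ ((q ^ s) ^ l) + ∑ i : Fin h, a i * x ^ ((q ^ s) ^ (i : ℕ)) = 0} = q ^ l)
    (b : Module.Basis (Fin m) Fq K) :
    ∃ w : Fin n → K, w ∉ C ∧
      g ≤ Nat.card {V : Submodule Fq (Fin (n + m) → Fq) //
        (∃ c ∈ C, V = liftv Fq b c) ∧ sdist Fq (liftv Fq b w) V ≤ 2 * (n - l)} := by
  classical
  have hq2 : 2 ≤ q := by
    have := Fintype.one_lt_card (α := Fq)
    omega
  have hln : l < n := by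
    have h0 : (0 : ℤ) ≤ (((d - 1) / 2 : ℕ) : ℤ) := Int.natCast_nonneg _
    omega
  have hsn : Nat.Coprime s n := Nat.Coprime.coprime_dvd_right hnm hs
  set V : Submodule Fq K := Submodule.span Fq (Set.range α) with hV
  have hVsp : Module.finrank Fq ↥V = n := by
    rw [hV, finrank_span_eq_card hα, Fintype.card_fin]
  set S : Set K := {x : K | x ^ q ^ n = x} with hSdef
  have hmemV : ∀ x ∈ S, β * x ∈ V := by
    intro x hx
    have hx2 : β * x ∈ (V : Set K) := by
      rw [hspan]; exact ⟨x, hx, rfl⟩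
    exact hx2
  have hcardV : Nat.card ↥V = q ^ n := by rw [nat_card_submodule V, hVsp, hcard]
  have hcardS : Nat.card ↥S = q ^ n := by
    have h1 : Nat.card ↥((fun y : K => β * y) '' S) = Nat.card ↥S :=
      Nat.card_image_of_injective (fun x y hxy => mul_left_cancel₀ hβ hxy) S
    rw [← hspan] at h1
    rw [← h1]
    exact hcardV
  have hexp : ∀ (x : K) (t : ℕ), x ^ (q ^ s) ^ t = x ^ q ^ (s * t) := fun x t => by
    rw [← pow_mul]
  have hmon : ∀ (cf : K) (t : ℕ) (x : K), monLin Fq cf t x = cf * x ^ q ^ t :=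
    fun cf t x => by rw [monLin_apply, hcard]
  have hφadd : ∀ x y : K, (x + y) ^ q ^ (s * j) = x ^ q ^ (s * j) + y ^ q ^ (s * j) := by
    intro x y
    have hh := (pow_card_isLinearMap Fq K (s * j)).map_add x y
    rwa [hcard] at hh
  have hφsum : ∀ (f : Fin h → K),
      (∑ k, f k) ^ q ^ (s * j) = ∑ k, (f k) ^ q ^ (s * j) := by
    intro f
    have hh := map_sum (IsLinearMap.mk' _ (pow_card_isLinearMap Fq K (s * j))) f
      Finset.univ
    simp only [IsLinearMap.mk'_apply] at hh
    rwa [hcard] at hh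
  have hqsj : q ^ (s * j) ≠ 0 := (pow_pos (show 0 < q by omega) (s * j)).ne'
  set cf : (Fin h → K) → Fin h → K :=
    fun a k => (a k) ^ q ^ (s * j) * (β ^ q ^ (s * (j + (k : ℕ))))⁻¹ with hcf
  set w : Fin n → K :=
    fun i => (β ^ q ^ (s * (j + l)))⁻¹ * (α i) ^ q ^ (s * (j + l)) with hw
  set cw : (Fin h → K) → Fin n → K :=
    fun a i => ∑ k : Fin h, (-(cf a k)) * (α i) ^ (q ^ s) ^ (j + (k : ℕ)) with hcw
  set T : (Fin h → K) → (K →ₗ[Fq] K) :=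
    fun a => monLin Fq (β ^ q ^ (s * (j + l)))⁻¹ (s * (j + l))
      + ∑ k : Fin h, monLin Fq (cf a k) (s * (j + (k : ℕ))) with hT
  set fa : (Fin h → K) → K → K :=
    fun a t => t ^ (q ^ s) ^ l + ∑ k : Fin h, a k * t ^ (q ^ s) ^ (k : ℕ) with hfadef
  have hR2 : ∀ a ∈ Sub, Nat.card ↥{x : K | x ^ q ^ n = x ∧ fa a x = 0} = q ^ l :=
    fun a ha => (hSub a ha).2
  have hcwC : ∀ a : Fin h → K, cw a ∈ C := by
    intro a
    rw [hC]
    exact ⟨fun x => ∑ k : Fin h, (-(cf a k)) * x ^ (q ^ s) ^ (j + (k : ℕ)),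
      hGab ⟨fun k => -(cf a k), fun x => rfl⟩, rfl⟩
  have hTapply : ∀ (a : Fin h → K) (x : K),
      T a x = (β ^ q ^ (s * (j + l)))⁻¹ * x ^ q ^ (s * (j + l))
        + ∑ k : Fin h, cf a k * x ^ q ^ (s * (j + (k : ℕ))) := by
    intro a x
    rw [hT]
    simp only [LinearMap.add_apply, LinearMap.sum_apply]
    rw [hmon]
    congr 1
    exact Finset.sum_congr rfl fun k _ => hmon _ _ _
  have hwc : ∀ (a : Fin h → K) (i : Fin n), w i - cw a i = T a (α i) := by
    intro a i
    rw [hTapply]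
    simp only [hw, hcw, neg_mul, Finset.sum_neg_distrib, sub_neg_eq_add, hexp]
  have hfa : ∀ (a : Fin h → K) (t : K), T a (β * t) = (fa a t) ^ q ^ (s * j) := by
    intro a t
    have hβp : ∀ u : ℕ, β ^ u ≠ 0 := fun u => pow_ne_zero u hβ
    rw [hTapply]
    have h1 : (β ^ q ^ (s * (j + l)))⁻¹ * (β * t) ^ q ^ (s * (j + l))
        = t ^ q ^ (s * (j + l)) := by
      rw [mul_pow, inv_mul_cancel_left₀ (hβp _)]
    have h2 : ∀ k : Fin h, cf a k * (β * t) ^ q ^ (s * (j + (k : ℕ)))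
        = (a k) ^ q ^ (s * j) * t ^ q ^ (s * (j + (k : ℕ))) := by
      intro k
      simp only [hcf]
      rw [mul_pow, mul_assoc, inv_mul_cancel_left₀ (hβp _)]
    rw [h1, Finset.sum_congr rfl fun k _ => h2 k]
    have hR : (fa a t) ^ q ^ (s * j)
        = t ^ q ^ (s * (j + l))
          + ∑ k : Fin h, (a k) ^ q ^ (s * j) * t ^ q ^ (s * (j + (k : ℕ))) := by
      simp only [hfadef]
      rw [hφadd, hφsum]
      congr 1
      · rw [hexp, ← pow_mul, ← pow_add]
        have hee : s * l + s * j = s * (j + l) := by ring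
        rw [hee]
      · refine Finset.sum_congr rfl fun k _ => ?_
        rw [mul_pow, hexp, ← pow_mul, ← pow_add]
        have hee : s * (k : ℕ) + s * j = s * (j + (k : ℕ)) := by ring
        rw [hee]
    rw [hR]
  have hker1 : ∀ (a : Fin h → K) (t : K), fa a t = 0 → T a (β * t) = 0 := by
    intro a t hft
    rw [hfa, hft, zero_pow hqsj]
  have hker2 : ∀ (a : Fin h → K) (t : K), T a (β * t) = 0 → fa a t = 0 := by
    intro a t hTt
    rw [hfa] at hTt
    exact (pow_eq_zero_iff hqsj).mp hTt
  have hrk : ∀ a ∈ Sub, rkw Fq (w - cw a) ≤ n - l := by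
    intro a ha
    have hwceq : w - cw a = fun i => T a (α i) := funext fun i => hwc a i
    rw [rkw, hwceq]
    have hrange : Set.range (fun i : Fin n => T a (α i)) = (T a) '' Set.range α := by
      rw [← Set.range_comp]
      rfl
    rw [hrange, ← Submodule.map_span, ← hV]
    have hrn := LinearMap.finrank_range_add_finrank_ker ((T a).domRestrict V)
    rw [LinearMap.range_domRestrict, hVsp] at hrn
    have hkerl : l ≤ Module.finrank Fq ↥(LinearMap.ker ((T a).domRestrict V)) := by
      have hinj : Function.Injective
          (fun x : ↥{x : K | x ^ q ^ n = x ∧ fa a x = 0} =>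
            (⟨⟨β * x.1, hmemV x.1 x.2.1⟩, by
              rw [LinearMap.mem_ker, LinearMap.domRestrict_apply]
              exact hker1 a x.1 x.2.2⟩ : ↥(LinearMap.ker ((T a).domRestrict V)))) := by
        intro x y hxy
        have h1 : β * (x.1 : K) = β * (y.1 : K) :=
          congrArg (fun z : ↥(LinearMap.ker ((T a).domRestrict V)) => ((z.1 : ↥V) : K)) hxy
        exact Subtype.ext (mul_left_cancel₀ hβ h1)
      have hcle := Nat.card_le_card_of_injective _ hinj
      rw [hR2 a ha, nat_card_submodule, hcard] at hcle
      exact (Nat.pow_le_pow_iff_right (by omega)).mp hcle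
    omega
  have hwne : ∀ a ∈ Sub, w ≠ cw a := by
    intro a ha heq
    have hVker : V ≤ LinearMap.ker (T a) := by
      rw [hV, Submodule.span_le]
      rintro y ⟨i, rfl⟩
      rw [SetLike.mem_coe, LinearMap.mem_ker, ← hwc a i, heq, sub_self]
    have hz : ∀ x ∈ S, fa a x = 0 := fun x hx =>
      hker2 a x (hVker (hmemV x hx))
    have hseq : {x : K | x ^ q ^ n = x ∧ fa a x = 0} = S :=
      Set.ext fun x => ⟨fun hh => hh.1, fun hh => ⟨hh, hz x hh⟩⟩
    have hcc := hR2 a ha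
    rw [hseq, hcardS] at hcc
    have := Nat.pow_right_injective hq2 hcc
    omega
  rcases Nat.eq_zero_or_pos g with hg0 | hgpos
  · by_cases hCall : ∀ v : Fin n → K, v ∈ C
    · exfalso
      set i0 : Fin n := ⟨0, hn⟩ with hi0
      set u : Fin n → K := 0 with hu
      set v : Fin n → K := Pi.single i0 1 with hv
      have hne : u ≠ v := by
        intro hweq
        have h1 := congrFun hweq i0
        simp only [hu, hv, Pi.zero_apply, Pi.single_eq_same] at h1
        exact one_ne_zero h1.symm
      have hrk1 : rkw Fq (u - v) ≤ 1 := by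
        rw [rkw]
        have hsubr : Set.range (u - v) ⊆ ↑(Submodule.span Fq {(-1 : K)}) := by
          rintro y ⟨i, rfl⟩
          by_cases hii : i = i0
          · subst hii
            simp only [hu, hv, Pi.sub_apply, Pi.zero_apply, Pi.single_eq_same, zero_sub]
            exact Submodule.subset_span rfl
          · simp only [hu, hv, Pi.sub_apply, Pi.zero_apply, Pi.single_eq_of_ne hii,
              sub_zero, SetLike.mem_coe]
            exact Submodule.zero_mem _
        calc Module.finrank Fq ↥(Submodule.span Fq (Set.range (u - v)))
            ≤ Module.finrank Fq ↥(Submodule.span Fq {(-1 : K)}) :=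
              Submodule.finrank_mono (Submodule.span_le.mpr hsubr)
          _ = 1 := finrank_span_singleton (neg_ne_zero.mpr one_ne_zero)
      have hd1 : d ≤ 1 := by
        have hmem : rkw Fq (u - v) ∈ {r : ℕ | ∃ u' ∈ C, ∃ v' ∈ C, u' ≠ v'
            ∧ rkw Fq (u' - v') = r} := ⟨u, hCall u, v, hCall v, hne, rfl⟩
        have h2 := Nat.sInf_le hmem
        rw [hd]
        exact le_trans h2 hrk1
      have h0 : (0 : ℤ) ≤ (((d - 1) / 2 : ℕ) : ℤ) := Int.natCast_nonneg _
      omega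
    · push_neg at hCall
      obtain ⟨w0, hw0⟩ := hCall
      exact ⟨w0, hw0, le_trans (le_of_eq hg0) (Nat.zero_le _)⟩
  · have hSubne : Sub.Nonempty := by
      rcases Set.eq_empty_or_nonempty Sub with he | hne
      · exfalso
        rw [he] at hSubcard
        simp at hSubcard
        omega
      · exact hne
    obtain ⟨a₀, ha₀⟩ := hSubne
    have hwCne : w ∉ C := by
      intro hwCmem
      have hdle : d ≤ n - l := by
        have hmem : rkw Fq (w - cw a₀) ∈ {r : ℕ | ∃ u' ∈ C, ∃ v' ∈ C, u' ≠ v'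
            ∧ rkw Fq (u' - v') = r} := ⟨w, hwCmem, cw a₀, hcwC a₀, hwne a₀ ha₀, rfl⟩
        have h1 := Nat.sInf_le hmem
        rw [hd]
        exact le_trans h1 (hrk a₀ ha₀)
      omega
    have hcwinj : ∀ a ∈ Sub, ∀ a' ∈ Sub, cw a = cw a' → a = a' := by
      intro a ha a' ha' hcc
      have hTeq : ∀ y ∈ V, T a y = T a' y := by
        have hle : V ≤ LinearMap.ker (T a - T a') := by
          rw [hV, Submodule.span_le]
          rintro y ⟨i, rfl⟩
          rw [SetLike.mem_coe, LinearMap.mem_ker, LinearMap.sub_apply, ← hwc a i,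
            ← hwc a' i, hcc, sub_self]
        intro y hy
        have h1 := hle hy
        rw [LinearMap.mem_ker, LinearMap.sub_apply, sub_eq_zero] at h1
        exact h1
      have hfeq : ∀ t ∈ S, fa a t = fa a' t := by
        intro t ht
        have h1 := hTeq (β * t) (hmemV t ht)
        rw [hfa, hfa] at h1
        have h4 := hφadd (fa a t - fa a' t) (fa a' t)
        rw [sub_add_cancel, h1] at h4
        have h4' := h4.symm
        rw [add_eq_right] at h4'
        have h5 := (pow_eq_zero_iff hqsj).mp h4'
        exact sub_eq_zero.mp h5
      have hsum0 : ∀ t ∈ S,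
          ∑ k : Fin h, (a k - a' k) * t ^ q ^ ((s * (k : ℕ)) % n) = 0 := by
        intro t ht
        have h1 := hfeq t ht
        simp only [hfadef] at h1
        have h2 : ∑ k : Fin h, a k * t ^ (q ^ s) ^ (k : ℕ)
            = ∑ k : Fin h, a' k * t ^ (q ^ s) ^ (k : ℕ) := add_left_cancel h1
        have h3 : ∑ k : Fin h, (a k - a' k) * t ^ (q ^ s) ^ (k : ℕ) = 0 := by
          rw [Finset.sum_congr rfl fun k _ => sub_mul (a k) (a' k) _,
            Finset.sum_sub_distrib, h2, sub_self]
        rw [← h3]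
        refine Finset.sum_congr rfl fun k _ => ?_
        have ht' : t ^ q ^ n = t := ht
        have h6 : t ^ (q ^ s) ^ (k : ℕ) = t ^ q ^ ((s * (k : ℕ)) % n) := by
          rw [hexp, pow_pow_mod q n t ht' (s * (k : ℕ))]
        rw [h6]
      have heinj : Function.Injective (fun k : Fin h => (s * (k : ℕ)) % n) := by
        intro k k' hkk
        have hm : Nat.ModEq n (s * (k : ℕ)) (s * (k' : ℕ)) := hkk
        have hm2 : Nat.ModEq n (k : ℕ) (k' : ℕ) :=
          Nat.ModEq.cancel_left_of_coprime (Nat.coprime_comm.mp hsn) hm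
        have h7 : (k : ℕ) % n = (k' : ℕ) % n := hm2
        rw [Nat.mod_eq_of_lt (lt_trans (lt_of_lt_of_le k.2 hhl) hln),
          Nat.mod_eq_of_lt (lt_trans (lt_of_lt_of_le k'.2 hhl) hln)] at h7
        exact Fin.ext h7
      have hall := qpoly_vanish q n h hq2 hn S hcardS
        (fun k => (s * (k : ℕ)) % n) heinj (fun k => Nat.mod_lt _ hn)
        (fun k => a k - a' k) hsum0
      funext k
      exact sub_eq_zero.mp (hall k)
    haveI : Finite (Submodule Fq (Fin (n + m) → Fq)) :=
      Finite.of_injective (fun W : Submodule Fq (Fin (n + m) → Fq)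
        => (W : Set (Fin (n + m) → Fq))) SetLike.coe_injective
    refine ⟨w, hwCne, ?_⟩
    rw [← hSubcard]
    exact Nat.card_le_card_of_injective
      (fun a : ↥Sub => (⟨liftv Fq b (cw a.1), ⟨cw a.1, hcwC a.1, rfl⟩,
        le_trans (sdist_liftv_le Fq b w (cw a.1))
          (Nat.mul_le_mul_left 2 (hrk a.1 a.2))⟩ :
        {V : Submodule Fq (Fin (n + m) → Fq) //
          (∃ c ∈ C, V = liftv Fq b c) ∧ sdist Fq (liftv Fq b w) V ≤ 2 * (n - l)}))
      (fun x y hxy => Subtype.ext (hcwinj x.1 x.2 y.1 y.2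
        (liftv_injective Fq b (congrArg Subtype.val hxy))))
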